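/- Let G ⊆ (ℤ/2ℤ)^n. There exists a nonzero function n : (ℤ/2ℤ)^n → ℤ with n(ξ) = −n(ξ + g) for all ξ ∈ (ℤ/2ℤ)^n and g ∈ G, if and only if there exists a basis of (ℤ/2ℤ)^n over 𝔽₂ such that every element of G is a sum of an odd number of basis vectors. -/

import Mathlib

private lemma zmod2_eq_zero_or_one : ∀ x : ZMod 2, x = 0 ∨ x = 1 := by decide

private lemma zmod2_ne_zero : ∀ x : ZMod 2, x ≠ 0 → x = 1 := by decide

private lemma zmod2_add_one_eq_zero : ∀ a : ZMod 2, a + 1 = 0 → a = 1 := by decide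

private lemma addself {n : ℕ} (x : Fin n → ZMod 2) : x + x = 0 := by
  funext j
  have : ∀ a : ZMod 2, a + a = 0 := by decide
  exact this (x j)

private lemma natCast_zmod2_eq_one_iff_odd (m : ℕ) : (m : ZMod 2) = 1 ↔ Odd m := by
  rw [Nat.odd_iff]
  constructor
  · intro h
    rcases Nat.mod_two_eq_zero_or_one m with h2 | h2
    · exfalso
      have h3 : ((m % 2 : ℕ) : ZMod 2) = 1 := by rw [ZMod.natCast_mod]; exact h
      rw [h2] at h3
      simp at h3
    · exact h2
  · intro h
    have h3 : ((m % 2 : ℕ) : ZMod 2) = (m : ZMod 2) := ZMod.natCast_mod m 2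
    rw [h] at h3
    rw [← h3]
    simp

private lemma basis_of_functional (n : ℕ) (G : Set (Fin n → ZMod 2))
    (φ : (Fin n → ZMod 2) →ₗ[ZMod 2] ZMod 2) (hφ : ∀ g ∈ G, φ g = 1) :
    ∃ e : Module.Basis (Fin n) (ZMod 2) (Fin n → ZMod 2),
      ∀ g ∈ G, ∃ l : List (Fin n), Odd l.length ∧ g = (l.map e).sum := by
  by_cases hG : G = ∅
  · exact ⟨Pi.basisFun _ _, by simp [hG]⟩
  · obtain ⟨g₁, hg₁⟩ := Set.nonempty_iff_ne_empty.mpr hG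
    have hφ0 : φ ≠ 0 := by
      intro h
      have := hφ g₁ hg₁
      rw [h] at this
      simp at this
    set b := Pi.basisFun (ZMod 2) (Fin n) with hb
    have hex : ∃ i₀, φ (b i₀) = 1 := by
      by_contra h
      push_neg at h
      apply hφ0
      apply b.ext
      intro i
      simp only [LinearMap.zero_apply]
      rcases zmod2_eq_zero_or_one (φ (b i)) with h1 | h1
      · exact h1
      · exact absurd h1 (h i)
    obtain ⟨i₀, hi₀⟩ := hex
    set c : Fin n → (Fin n → ZMod 2) := fun i => if φ (b i) = 1 then b i else b i + b i₀ with hc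
    have hφc : ∀ i, φ (c i) = 1 := by
      intro i
      rcases zmod2_eq_zero_or_one (φ (b i)) with h1 | h1
      · have : c i = b i + b i₀ := by simp [hc, h1]
        rw [this, map_add, h1, hi₀, zero_add]
      · have : c i = b i := by simp [hc, h1]
        rw [this, h1]
    have hci₀ : c i₀ = b i₀ := by simp [hc, hi₀]
    set T : (Fin n → ZMod 2) →ₗ[ZMod 2] (Fin n → ZMod 2) := b.constr (ZMod 2) c with hT
    have hTb : ∀ i, T (b i) = c i := fun i => b.constr_basis (ZMod 2) c i
    have hTT : T ∘ₗ T = LinearMap.id := by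
      apply b.ext
      intro i
      simp only [LinearMap.comp_apply, LinearMap.id_apply]
      rw [hTb]
      rcases zmod2_eq_zero_or_one (φ (b i)) with h1 | h1
      · have hci : c i = b i + b i₀ := by simp [hc, h1]
        rw [hci, map_add, hTb, hTb, hci, hci₀, add_assoc, addself, add_zero]
      · have hci : c i = b i := by simp [hc, h1]
        rw [hci, hTb, hci]
    set E : (Fin n → ZMod 2) ≃ₗ[ZMod 2] (Fin n → ZMod 2) :=
      LinearEquiv.ofLinear T T hTT hTT with hE
    set e := b.map E with he
    have heapp : ∀ i, e i = c i := by
      intro i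
      rw [he, Module.Basis.map_apply, hE, LinearEquiv.ofLinear_apply, hTb]
    refine ⟨e, ?_⟩
    intro g hg
    set s := (e.repr g).support with hs
    have hrepr : ∀ i ∈ s, (e.repr g) i = 1 := by
      intro i hi
      exact zmod2_ne_zero _ (Finsupp.mem_support_iff.mp hi)
    have hgsum : g = ∑ i ∈ s, e i := by
      conv_lhs => rw [← e.sum_repr g]
      rw [← Finset.sum_subset (Finset.subset_univ s) (fun i _ hi => by
        rw [Finsupp.notMem_support_iff.mp hi, zero_smul])]
      exact Finset.sum_congr rfl (fun i hi => by rw [hrepr i hi, one_smul])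
    have hcard : ((s.card : ZMod 2)) = 1 := by
      have h1 : φ g = ∑ i ∈ s, φ (e i) := by rw [hgsum, map_sum]
      have h2 : ∀ i ∈ s, φ (e i) = 1 := fun i _ => by rw [heapp]; exact hφc i
      rw [hφ g hg, Finset.sum_congr rfl h2, Finset.sum_const, nsmul_eq_mul, mul_one] at h1
      exact h1.symm
    refine ⟨s.toList, ?_, ?_⟩
    · rw [Finset.length_toList]
      exact (natCast_zmod2_eq_one_iff_odd _).mp hcard
    · rw [hgsum]
      exact (Finset.sum_map_toList s ⇑e).symm

private lemma functional_of_basis (n : ℕ) (G : Set (Fin n → ZMod 2))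
    (e : Module.Basis (Fin n) (ZMod 2) (Fin n → ZMod 2))
    (he : ∀ g ∈ G, ∃ l : List (Fin n), Odd l.length ∧ g = (l.map e).sum) :
    ∃ φ : (Fin n → ZMod 2) →ₗ[ZMod 2] ZMod 2, ∀ g ∈ G, φ g = 1 := by
  refine ⟨e.constr (ZMod 2) (fun _ => 1), ?_⟩
  intro g hg
  obtain ⟨l, hodd, hsum⟩ := he g hg
  rw [hsum, map_list_sum, List.map_map]
  have h1 : (⇑(e.constr (ZMod 2) fun _ => (1 : ZMod 2)) ∘ e) = fun _ => (1 : ZMod 2) := by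
    funext i
    simp [Module.Basis.constr_basis]
  rw [h1, List.map_const', List.sum_replicate, nsmul_eq_mul, mul_one]
  exact (natCast_zmod2_eq_one_iff_odd _).mpr hodd

private lemma f_of_functional (n : ℕ) (G : Set (Fin n → ZMod 2))
    (φ : (Fin n → ZMod 2) →ₗ[ZMod 2] ZMod 2) (hφ : ∀ g ∈ G, φ g = 1) :
    ∃ f : (Fin n → ZMod 2) → ℤ, f ≠ 0 ∧ ∀ ξ, ∀ g ∈ G, f ξ = - f (ξ + g) := by
  refine ⟨fun ξ => if φ ξ = 0 then 1 else -1, ?_, ?_⟩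
  · intro h
    have h0 := congrFun h 0
    simp at h0
  · intro ξ g hg
    have h1 : φ (ξ + g) = φ ξ + 1 := by rw [map_add, hφ g hg]
    rcases zmod2_eq_zero_or_one (φ ξ) with h2 | h2 <;>
      simp [h1, h2] <;> decide

private lemma functional_of_f (n : ℕ) (G : Set (Fin n → ZMod 2))
    (f : (Fin n → ZMod 2) → ℤ) (hf0 : f ≠ 0)
    (hf : ∀ ξ, ∀ g ∈ G, f ξ = - f (ξ + g)) :
    ∃ φ : (Fin n → ZMod 2) →ₗ[ZMod 2] ZMod 2, ∀ g ∈ G, φ g = 1 := by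
  rcases Set.eq_empty_or_nonempty G with hG | ⟨g₀, hg₀⟩
  · exact ⟨0, by simp [hG]⟩
  · have hkey : ∀ l : List (Fin n → ZMod 2), (∀ x ∈ l, x ∈ G) →
        ∀ ξ, f ξ = (-1) ^ l.length * f (ξ + l.sum) := by
      intro l
      induction l with
      | nil => intro _ ξ; simp
      | cons x xs ih =>
        intro hmem ξ
        have h1 : f ξ = - f (ξ + x) := hf ξ x (hmem x (by simp))
        have h2 : f (ξ + x) = (-1) ^ xs.length * f (ξ + x + xs.sum) :=
          ih (fun y hy => hmem y (by simp [hy])) (ξ + x)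
        rw [h1, h2, List.sum_cons, List.length_cons, ← add_assoc, pow_succ]
        ring
    set M : Submodule (ZMod 2) (Fin n → ZMod 2) :=
      { carrier := {v | ∃ l : List (Fin n → ZMod 2), (∀ x ∈ l, x ∈ G) ∧ Even l.length ∧ v = l.sum}
        add_mem' := by
          rintro a b ⟨la, hla, hea, rfl⟩ ⟨lb, hlb, heb, rfl⟩
          refine ⟨la ++ lb, ?_, ?_, ?_⟩
          · intro x hx
            rcases List.mem_append.mp hx with h | h
            · exact hla x h
            · exact hlb x h
          · rw [List.length_append]; exact hea.add heb
          · rw [List.sum_append]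
        zero_mem' := ⟨[], by simp, by simp, by simp⟩
        smul_mem' := by
          rintro cc v ⟨l, hl, hev, rfl⟩
          rcases zmod2_eq_zero_or_one cc with rfl | rfl
          · exact ⟨[], by simp, by simp, by simp⟩
          · exact ⟨l, hl, hev, by simp⟩ } with hM
    set W : Submodule (ZMod 2) (Fin n → ZMod 2) :=
      Submodule.span (ZMod 2) {v | ∃ a ∈ G, ∃ b ∈ G, v = a + b} with hW
    have hWM : W ≤ M := by
      rw [hW]
      apply Submodule.span_le.mpr
      rintro v ⟨a, ha, b, hb, rfl⟩
      refine ⟨[a, b], ?_, ?_, ?_⟩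
      · intro x hx
        rcases List.mem_cons.mp hx with rfl | hx
        · exact ha
        · rcases List.mem_cons.mp hx with rfl | hx
          · exact hb
          · simp at hx
      · exact ⟨1, rfl⟩
      · simp
    have hg₀W : g₀ ∉ W := by
      intro hmem
      obtain ⟨l, hl, hev, hsum⟩ := hWM hmem
      have h1 : ∀ ξ, f ξ = f (ξ + g₀) := by
        intro ξ
        have h2 := hkey l hl ξ
        rw [← hsum, hev.neg_one_pow, one_mul] at h2
        exact h2
      apply hf0
      funext η
      have hz : ∀ ξ, f (ξ + g₀) = 0 := by
        intro ξ
        have h3 := (h1 ξ).symm.trans (hf ξ g₀ hg₀)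
        linarith
      have h4 := hz (η + g₀)
      rwa [add_assoc, addself, add_zero] at h4
    have hπ : Submodule.Quotient.mk g₀ ≠ (0 : (Fin n → ZMod 2) ⧸ W) := by
      intro h
      exact hg₀W ((Submodule.Quotient.mk_eq_zero W).mp h)
    obtain ⟨ψ, hψ⟩ : ∃ ψ : Module.Dual (ZMod 2) ((Fin n → ZMod 2) ⧸ W),
        ψ (Submodule.Quotient.mk g₀) ≠ 0 := by
      by_contra h
      push_neg at h
      exact hπ ((Module.forall_dual_apply_eq_zero_iff (ZMod 2) _).mp h)
    refine ⟨ψ.comp W.mkQ, ?_⟩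
    intro g hg
    have hgg₀ : (g + g₀) ∈ W := Submodule.subset_span ⟨g, hg, g₀, hg₀, rfl⟩
    have h1 : W.mkQ (g + g₀) = 0 := (Submodule.Quotient.mk_eq_zero W).mpr hgg₀
    have h2 : ψ (W.mkQ g) + ψ (W.mkQ g₀) = 0 := by
      rw [← map_add, ← map_add, h1, map_zero]
    have h3 : ψ (W.mkQ g₀) = 1 := by
      apply zmod2_ne_zero
      rw [Submodule.mkQ_apply]
      exact hψ
    rw [h3] at h2
    simp only [LinearMap.comp_apply]
    exact zmod2_add_one_eq_zero _ h2

/-- There is a nonzero function `f : (ℤ/2ℤ)^n → ℤ` with `f ξ = - f (ξ + g)` for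
all `g ∈ G` iff there is a basis of `(ℤ/2ℤ)^n` such that every element of `G` is a sum of an
odd number of basis vectors. -/
theorem stmt6 (n : ℕ) (G : Set (Fin n → ZMod 2)) :
    (∃ f : (Fin n → ZMod 2) → ℤ, f ≠ 0 ∧ ∀ ξ, ∀ g ∈ G, f ξ = - f (ξ + g)) ↔
    (∃ e : Module.Basis (Fin n) (ZMod 2) (Fin n → ZMod 2),
      ∀ g ∈ G, ∃ l : List (Fin n), Odd l.length ∧ g = (l.map e).sum) := by
  constructor
  · rintro ⟨f, hf0, hf⟩
    obtain ⟨φ, hφ⟩ := functional_of_f n G f hf0 hf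
    exact basis_of_functional n G φ hφ
  · rintro ⟨e, he⟩
    obtain ⟨φ, hφ⟩ := functional_of_basis n G e he
    exact f_of_functional n G φ hφ
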